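/- For every natural number m, the double integral ∫_{-1}^{1} ∫_{-1}^{1} (ξ₁ - ξ₂)^{2m} ln|ξ₁ - ξ₂| dξ₂ dξ₁ equals 2^{2m+2} ln 2 / ((2m+1)(m+1)) − (4m+3) 2^{2m+3} / ((2m+1)² (2m+2)²). -/

import Mathlib

open Real MeasureTheory intervalIntegral Set

/-- Antiderivative of `x ^ (n+1) * log x` (up to the exceptional point 0). -/
noncomputable def Flog (n : ℕ) (x : ℝ) : ℝ :=
  (x ^ (n + 1) * Real.log x - x ^ (n + 1) / (n + 1)) / (n + 1)

/-- Antiderivative of `Flog n` (up to the exceptional point 0). -/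
noncomputable def Glog (n : ℕ) (x : ℝ) : ℝ :=
  (x ^ (n + 2) * Real.log x - x ^ (n + 2) / (n + 2)) / ((n + 1) * (n + 2))
    - x ^ (n + 2) / ((n + 2) * ((n : ℝ) + 1) ^ 2)

lemma continuous_pow_mul_log (n : ℕ) :
    Continuous fun x : ℝ => x ^ (n + 1) * Real.log x := by
  have h : (fun x : ℝ => x ^ (n + 1) * Real.log x)
      = fun x : ℝ => x ^ n * (x * Real.log x) := by
    funext x; ring
  rw [h]
  exact (continuous_pow n).mul Real.continuous_mul_log

lemma continuous_Flog (n : ℕ) : Continuous (Flog n) := by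
  unfold Flog
  exact ((continuous_pow_mul_log n).sub ((continuous_pow _).div_const _)).div_const _

lemma continuous_Glog (n : ℕ) : Continuous (Glog n) := by
  unfold Glog
  exact (((continuous_pow_mul_log (n + 1)).sub ((continuous_pow _).div_const _)).div_const _).sub
    ((continuous_pow _).div_const _)

lemma hasDerivAt_pow_mul_log (n : ℕ) {x : ℝ} (hx : x ≠ 0) :
    HasDerivAt (fun x : ℝ => x ^ (n + 1) * Real.log x)
      (((n : ℝ) + 1) * x ^ n * Real.log x + x ^ n) x := by
  have h := (hasDerivAt_pow (n + 1) x).mul (Real.hasDerivAt_log hx)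
  convert! h using 1
  have : x ^ (n + 1) * x⁻¹ = x ^ n := by
    rw [pow_succ, mul_assoc, mul_inv_cancel₀ hx, mul_one]
  rw [Nat.add_sub_cancel, this]
  push_cast
  ring

lemma hasDerivAt_Flog (n : ℕ) {x : ℝ} (hx : x ≠ 0) :
    HasDerivAt (Flog n) (x ^ n * Real.log x) x := by
  have hn : ((n : ℝ) + 1) ≠ 0 := by positivity
  have h1 := hasDerivAt_pow_mul_log n hx
  have h2 : HasDerivAt (fun x : ℝ => x ^ (n + 1) / ((n : ℝ) + 1)) (x ^ n) x := by
    have := (hasDerivAt_pow (n + 1) x).div_const ((n : ℝ) + 1)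
    convert! this using 1
    push_cast
    field_simp
  have h := (h1.sub h2).div_const ((n : ℝ) + 1)
  convert! h using 1
  field_simp
  ring

lemma hasDerivAt_Glog (n : ℕ) {x : ℝ} (hx : x ≠ 0) :
    HasDerivAt (Glog n) (Flog n x) x := by
  have hn1 : ((n : ℝ) + 1) ≠ 0 := by positivity
  have hn2 : ((n : ℝ) + 2) ≠ 0 := by positivity
  have h1 : HasDerivAt (fun x : ℝ => x ^ (n + 2) * Real.log x)
      (((n : ℝ) + 2) * x ^ (n + 1) * Real.log x + x ^ (n + 1)) x := by
    have := hasDerivAt_pow_mul_log (n + 1) hx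
    convert this using 2 <;> push_cast <;> ring
  have h2 : HasDerivAt (fun x : ℝ => x ^ (n + 2) / ((n : ℝ) + 2)) (x ^ (n + 1)) x := by
    have := (hasDerivAt_pow (n + 2) x).div_const ((n : ℝ) + 2)
    convert! this using 1
    push_cast
    field_simp
  have h3 : HasDerivAt (fun x : ℝ => x ^ (n + 2) / (((n : ℝ) + 2) * ((n : ℝ) + 1) ^ 2))
      (((n : ℝ) + 2) * x ^ (n + 1) / (((n : ℝ) + 2) * ((n : ℝ) + 1) ^ 2)) x := by
    have := (hasDerivAt_pow (n + 2) x).div_const (((n : ℝ) + 2) * ((n : ℝ) + 1) ^ 2)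
    convert! this using 1
    push_cast
    ring
  have h := (((h1.sub h2).div_const (((n : ℝ) + 1) * ((n : ℝ) + 2))).sub h3)
  convert! h using 1
  unfold Flog
  field_simp
  try ring

lemma intervalIntegrable_pow_log_pos (n : ℕ) {c : ℝ} (hc : 0 ≤ c) :
    IntervalIntegrable (fun t : ℝ => t ^ n * Real.log t) volume 0 c := by
  rcases eq_or_lt_of_le hc with h | h
  · exact h ▸ IntervalIntegrable.refl
  have h1 : IntervalIntegrable (fun t : ℝ => t ^ n * Real.log t) volume 0 (min c 1) := by
    have hm : (0 : ℝ) ≤ min c 1 := le_min hc zero_le_one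
    have := intervalIntegrable_deriv_of_nonneg (g := fun x => -(Flog n x))
      (g' := fun t => -(t ^ n * Real.log t)) (a := (0:ℝ)) (b := min c 1)
      ((continuous_Flog n).neg.continuousOn)
      (fun x hx => by
        rw [min_eq_left hm, max_eq_right hm] at hx
        exact (hasDerivAt_Flog n (ne_of_gt hx.1)).neg)
      (fun x hx => by
        rw [min_eq_left hm, max_eq_right hm] at hx
        have hx0 : 0 < x := hx.1
        have hx1 : x ≤ 1 := le_of_lt (lt_of_lt_of_le hx.2 (min_le_right c 1))
        have hlog : Real.log x ≤ 0 := Real.log_nonpos hx0.le hx1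
        have hle : x ^ n * Real.log x ≤ 0 :=
          mul_nonpos_of_nonneg_of_nonpos (pow_nonneg hx0.le n) hlog
        show (0:ℝ) ≤ -(x ^ n * Real.log x)
        linarith)
    have hneg := this.neg
    have heq : (-fun t : ℝ => -(t ^ n * Real.log t)) = fun t : ℝ => t ^ n * Real.log t := by
      funext t; simp
    rwa [heq] at hneg
  have h2 : IntervalIntegrable (fun t : ℝ => t ^ n * Real.log t) volume (min c 1) c := by
    apply ContinuousOn.intervalIntegrable
    intro x hx
    rw [Set.uIcc_of_le (min_le_left c 1)] at hx
    have hx0 : 0 < x := lt_of_lt_of_le (lt_min h zero_lt_one) hx.1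
    exact ((continuous_pow n).continuousAt.mul
      (Real.continuousAt_log (ne_of_gt hx0))).continuousWithinAt
  exact h1.trans h2

lemma intervalIntegrable_pow_log (n : ℕ) (a b : ℝ) :
    IntervalIntegrable (fun t : ℝ => t ^ n * Real.log t) volume a b := by
  have key : ∀ c : ℝ, IntervalIntegrable (fun t : ℝ => t ^ n * Real.log t) volume 0 c := by
    intro c
    rcases le_total 0 c with h | h
    · exact intervalIntegrable_pow_log_pos n h
    · have hpos := intervalIntegrable_pow_log_pos n (neg_nonneg.mpr h)
      have := ((IntervalIntegrable.iff_comp_neg (by simp [ENNReal.mul_eq_top])).mp hpos)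
      simp only [neg_zero, neg_neg] at this
      have heq : (fun x : ℝ => (-x) ^ n * Real.log (-x))
          = fun x : ℝ => (-1 : ℝ) ^ n * (x ^ n * Real.log x) := by
        funext x
        rw [Real.log_neg_eq_log, neg_pow]
        ring
      rw [heq] at this
      have h2 := this.smul ((-1 : ℝ) ^ n)
      have heq2 : ((-1 : ℝ) ^ n • fun x : ℝ => (-1 : ℝ) ^ n * (x ^ n * Real.log x))
          = fun x : ℝ => x ^ n * Real.log x := by
        funext x
        simp only [Pi.smul_apply, smul_eq_mul]
        rw [← mul_assoc, ← mul_pow]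
        norm_num
      rwa [heq2] at h2
  exact ((key a).symm).trans (key b)

lemma integral_pow_log_zero (n : ℕ) (b : ℝ) :
    ∫ t in (0 : ℝ)..b, t ^ n * Real.log t = Flog n b - Flog n 0 := by
  apply intervalIntegral.integral_eq_sub_of_hasDeriv_right
      ((continuous_Flog n).continuousOn)
  · intro x hx
    have hx0 : x ≠ 0 := by
      rintro rfl
      rcases hx with ⟨h1, h2⟩
      simp only [min_lt_iff, lt_max_iff, lt_self_iff_false, false_or] at h1 h2
      linarith
    exact (hasDerivAt_Flog n hx0).hasDerivWithinAt
  · exact intervalIntegrable_pow_log n 0 b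

lemma integral_pow_log (n : ℕ) (a b : ℝ) :
    ∫ t in a..b, t ^ n * Real.log t = Flog n b - Flog n a := by
  have h := intervalIntegral.integral_add_adjacent_intervals
    (intervalIntegrable_pow_log n a 0) (intervalIntegrable_pow_log n 0 b)
  have ha : ∫ t in a..(0:ℝ), t ^ n * Real.log t = -(Flog n a - Flog n 0) := by
    rw [intervalIntegral.integral_symm, integral_pow_log_zero]
  rw [← h, ha, integral_pow_log_zero]
  ring

lemma inner_eq (m : ℕ) (ξ₁ : ℝ) :
    ∫ ξ₂ in (-1 : ℝ)..1, (ξ₁ - ξ₂) ^ (2 * m) * Real.log (ξ₁ - ξ₂)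
      = Flog (2 * m) (ξ₁ + 1) - Flog (2 * m) (ξ₁ - 1) := by
  have h := intervalIntegral.integral_comp_sub_left
    (a := (-1 : ℝ)) (b := (1 : ℝ)) (fun t => t ^ (2 * m) * Real.log t) ξ₁
  simp only [sub_neg_eq_add] at h
  rw [h, integral_pow_log]

/-- Int₈(m): the double integral of (ξ₁ - ξ₂)^(2m) · ln|ξ₁ - ξ₂| over [-1,1]² equals
    2^(2m+2) ln 2 / ((2m+1)(m+1)) − (4m+3) 2^(2m+3) / ((2m+1)² (2m+2)²). -/
theorem int8_eval (m : ℕ) :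
    ∫ ξ₁ in (-1 : ℝ)..1, ∫ ξ₂ in (-1 : ℝ)..1,
        (ξ₁ - ξ₂) ^ (2 * m) * Real.log |ξ₁ - ξ₂|
      = 2 ^ (2 * m + 2) * Real.log 2 / ((2 * (m : ℝ) + 1) * ((m : ℝ) + 1))
        - (4 * (m : ℝ) + 3) * 2 ^ (2 * m + 3)
            / ((2 * (m : ℝ) + 1) ^ 2 * (2 * (m : ℝ) + 2) ^ 2) := by
  simp only [Real.log_abs]
  have hinner : ∫ ξ₁ in (-1 : ℝ)..1, ∫ ξ₂ in (-1 : ℝ)..1,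
      (ξ₁ - ξ₂) ^ (2 * m) * Real.log (ξ₁ - ξ₂)
      = ∫ ξ₁ in (-1 : ℝ)..1, (Flog (2 * m) (ξ₁ + 1) - Flog (2 * m) (ξ₁ - 1)) :=
    intervalIntegral.integral_congr (fun x _ => inner_eq m x)
  rw [hinner]
  -- FTC for the outer integral
  have houter : ∫ ξ₁ in (-1 : ℝ)..1, (Flog (2 * m) (ξ₁ + 1) - Flog (2 * m) (ξ₁ - 1))
      = (Glog (2 * m) 2 - Glog (2 * m) 0) - (Glog (2 * m) 0 - Glog (2 * m) (-2)) := by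
    have := intervalIntegral.integral_eq_sub_of_hasDerivAt_of_le
      (f := fun x => Glog (2 * m) (x + 1) - Glog (2 * m) (x - 1))
      (f' := fun x => Flog (2 * m) (x + 1) - Flog (2 * m) (x - 1))
      (a := (-1 : ℝ)) (b := 1) (by norm_num)
      (((continuous_Glog (2 * m)).comp (continuous_id.add continuous_const)).sub
        ((continuous_Glog (2 * m)).comp (continuous_id.sub continuous_const))).continuousOn
      ?_ ?_
    · rw [this]; norm_num
    · intro x hx
      have hx1 : x + 1 ≠ 0 := by rcases hx with ⟨h1, h2⟩; intro h; linarith [show x = -1 by linarith]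
      have hx2 : x - 1 ≠ 0 := by rcases hx with ⟨h1, h2⟩; intro h; linarith [show x = 1 by linarith]
      have d1 : HasDerivAt (fun y : ℝ => Glog (2 * m) (y + 1)) (Flog (2 * m) (x + 1)) x := by
        have := (hasDerivAt_Glog (2 * m) hx1).comp x ((hasDerivAt_id x).add_const 1)
        simpa using! this
      have d2 : HasDerivAt (fun y : ℝ => Glog (2 * m) (y - 1)) (Flog (2 * m) (x - 1)) x := by
        have := (hasDerivAt_Glog (2 * m) hx2).comp x ((hasDerivAt_id x).sub_const 1)
        simpa using! this
      exact d1.sub d2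
    · exact (((continuous_Flog (2 * m)).comp (continuous_id.add continuous_const)).sub
        ((continuous_Flog (2 * m)).comp (continuous_id.sub continuous_const))).intervalIntegrable _ _
  rw [houter]
  -- now pure computation
  have hG0 : Glog (2 * m) 0 = 0 := by
    unfold Glog
    norm_num
  have hGneg : Glog (2 * m) (-2) = Glog (2 * m) 2 := by
    unfold Glog
    rw [Real.log_neg_eq_log, Even.neg_pow (by exact ⟨m + 1, by ring⟩)]
  rw [hG0, hGneg]
  unfold Glog
  have h1 : (2 * (m : ℝ) + 1) ≠ 0 := by positivity
  have h2 : ((m : ℝ) + 1) ≠ 0 := by positivity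
  have h3 : (2 * (m : ℝ) + 2) ≠ 0 := by positivity
  have hcast1 : ((2 * m : ℕ) : ℝ) + 1 = 2 * (m : ℝ) + 1 := by push_cast; ring
  have hcast2 : ((2 * m : ℕ) : ℝ) + 2 = 2 * (m : ℝ) + 2 := by push_cast; ring
  rw [hcast1, hcast2]
  have hpow : (2 : ℝ) ^ (2 * m + 3) = 2 * 2 ^ (2 * m + 2) := by ring
  rw [hpow]
  field_simp
  ring
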